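/- Let ⟨𝒬, Q₀⟩ be the instance produced by the reduction from an OGTP instance ⟨𝒮, ℱ⟩, and let H be a final position of a play of Escape(Q₀, 𝒬) obeying Principles I and II, where the vertices of the initial chain D₀ = (G(q))[a,b], q ∈ Q_start, are a, x₁, …, xₙ, b in path order. Then for each vertex y of H with y ≠ a there exist in H a path consisting of red edges from x₁ to y and a path consisting of green edges from x₁ to y; and for each vertex y of H with y ≠ b there exist in H a path of red edges from y to xₙ and a path of green edges from y to xₙ. -/

import Mathlib

/-- A graph database (structure) over vertex type `V` and edge-label alphabet `γ`:
`D x c y` means that there is an edge from `x` to `y` labeled with `c`. -/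
def DB (V γ : Type) : Type := V → γ → V → Prop

/-- `pathSat D x w y` : the structure `D` satisfies `w(x,y)`, i.e. there is a directed
path from `x` to `y` whose consecutive edge labels spell the word `w`. -/
def pathSat {V γ : Type} (D : DB V γ) : V → List γ → V → Prop
  | x, [], y => x = y
  | x, c :: w, y => ∃ z, D x c z ∧ pathSat D z w y

/-- `D ⊨ L(x,y)` for a language `L` : some word of `L` labels a path from `x` to `y`. -/
def langSat {V γ : Type} (D : DB V γ) (L : Language γ) (x y : V) : Prop :=
  ∃ w ∈ L, pathSat D x w y

/-- The answer `L(D)` of the path query given by the language `L` on the database `D`. -/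
def qry {V γ : Type} (L : Language γ) (D : DB V γ) : Set (V × V) :=
  { p | langSat D L p.1 p.2 }

/-- All edge labels of `D` lie in the set `A`. -/
def labelsIn {V γ : Type} (D : DB V γ) (A : Set γ) : Prop :=
  ∀ x c y, D x c y → c ∈ A

/-- A language is regular iff it is the language of some regular expression. -/
def IsRegularLang {γ : Type} (L : Language γ) : Prop :=
  ∃ r : RegularExpression γ, r.matches' = L

/-! ### Red-green signature.  A letter of `Σ̄` is a pair `(color, a)` with
`color = true` meaning green and `color = false` meaning red. -/

/-- The green copy `G(w)` of a word `w`. -/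
def greenW {γ : Type} (w : List γ) : List (Bool × γ) := w.map (fun c => (true, c))

/-- The red copy `R(w)` of a word `w`. -/
def redW {γ : Type} (w : List γ) : List (Bool × γ) := w.map (fun c => (false, c))

/-- The green copy `G(L)` of a language `L`. -/
def greenL {γ : Type} (L : Language γ) : Language (Bool × γ) := greenW '' L

/-- The red copy `R(L)` of a language `L`. -/
def redL {γ : Type} (L : Language γ) : Language (Bool × γ) := redW '' L

/-- A constraint `L → L'` given by a pair of languages,
meaning `∀ x y, L(x,y) ⇒ L'(x,y)`. -/
structure RCon (γ : Type) where
  lhs : Language γ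
  rhs : Language γ

/-- `D ⊨ t` for a single constraint `t`. -/
def satRC {V γ : Type} (D : DB V γ) (t : RCon γ) : Prop :=
  ∀ x y, langSat D t.lhs x y → langSat D t.rhs x y

/-- `D ⊨ T` for a set `T` of constraints. -/
def satRCs {V γ : Type} (D : DB V γ) (T : Set (RCon γ)) : Prop :=
  ∀ t ∈ T, satRC D t

/-- `L→`, the regular constraint `G(L) → R(L)`. -/
def rcFwd {γ : Type} (L : Language γ) : RCon (Bool × γ) := ⟨greenL L, redL L⟩

/-- `L←`, the regular constraint `R(L) → G(L)`. -/
def rcBwd {γ : Type} (L : Language γ) : RCon (Bool × γ) := ⟨redL L, greenL L⟩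

/-- `𝒬↔ = ⋃_{L ∈ 𝒬} {L→, L←}`. -/
def biRC {γ : Type} (Qs : Set (Language γ)) : Set (RCon (Bool × γ)) :=
  rcFwd '' Qs ∪ rcBwd '' Qs

/-- A request is a triple `⟨x, y, t⟩`. -/
abbrev Req (V γ : Type) := V × V × RCon γ

/-- `rq T D` : the set of requests `⟨x,y,L→L'⟩` with `L → L' ∈ T`, `D ⊨ L(x,y)`
and `D ⊭ L'(x,y)`. -/
def rq {V γ : Type} (T : Set (RCon γ)) (D : DB V γ) : Set (Req V γ) :=
  { r | r.2.2 ∈ T ∧ langSat D r.2.2.lhs r.1 r.2.1 ∧ ¬ langSat D r.2.2.rhs r.1 r.2.1 }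

/-- A vertex of (i.e. active in) the structure `D`. -/
def activeV {V γ : Type} (D : DB V γ) (v : V) : Prop :=
  ∃ c u, D v c u ∨ D u c v

/-- The edge set of a chain whose consecutive vertices are listed in the first argument
and whose edge labels spell the second argument.  -/
def chainOf {V γ : Type} : List V → List γ → DB V γ
  | u :: v :: vs, c :: w => fun p d q => (p = u ∧ d = c ∧ q = v) ∨ chainOf (v :: vs) w p d q
  | _, _ => fun _ _ _ => False

/-- `D` is (exactly) the chain structure `w[x,y]` : its edges form a chain from `x` to `y`
labeled `w`, whose internal vertices are pairwise distinct and distinct from `x, y`. -/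
def IsChainStruct {V γ : Type} (D : DB V γ) (x : V) (w : List γ) (y : V) : Prop :=
  ∃ vs : List V, vs.length + 1 = w.length ∧ (x :: vs ++ [y]).Nodup ∧
    ∀ p c q, D p c q ↔ chainOf (x :: vs ++ [y]) w p c q

/-- `Step T D D'` : `D'` is obtained from `D` by simultaneously satisfying every request of
`rq T D` : for each request `⟨x,y,t⟩` a word `w` of the right-hand side of `t` is chosen and a
fresh path `w[x,y]` is added, the internal vertices of all the added paths being new
(not vertices of `D`) and pairwise distinct. -/
def Step {V γ : Type} (T : Set (RCon γ)) (D D' : DB V γ) : Prop :=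
  ∃ (wch : Req V γ → List γ) (vch : Req V γ → List V),
    (∀ r ∈ rq T D,
      wch r ∈ (r.2.2).rhs ∧ (vch r).length + 1 = (wch r).length ∧ (vch r).Nodup ∧
      ∀ v ∈ vch r, ¬ activeV D v ∧ v ≠ r.1 ∧ v ≠ r.2.1) ∧
    (∀ r ∈ rq T D, ∀ r' ∈ rq T D, r ≠ r' → ∀ v ∈ vch r, v ∉ vch r') ∧
    ∀ p c q, D' p c q ↔
      (D p c q ∨ ∃ r ∈ rq T D, chainOf (r.1 :: vch r ++ [r.2.1]) (wch r) p c q)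

/-- `H ∈ Ω(T, D₀)` : `H` is a final position, namely the union of a play
`D₀, D₁, D₂, …` with `Step T Dᵢ Dᵢ₊₁` for all `i`. -/
def FinalPos {V γ : Type} (T : Set (RCon γ)) (D₀ H : DB V γ) : Prop :=
  ∃ seq : ℕ → DB V γ, seq 0 = D₀ ∧ (∀ i, Step T (seq i) (seq (i + 1))) ∧
    ∀ p c q, H p c q ↔ ∃ i, seq i p c q

/-- `h` is a homomorphism from `D` to `M`. -/
def IsHom {V W γ : Type} (D : DB V γ) (M : DB W γ) (h : V → W) : Prop :=
  ∀ x c y, D x c y → M (h x) c (h y)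

/-! ### The alphabet of the reduction.
`Σ = {α, β, ω} ∪ Σ₀` with `Σ₀ = {A,B} × {H,V} × {W,C} × 𝒮`.
Conventions: in `Sig.base ab dir temp shade`,
`ab = true` means `A` and `ab = false` means `B`;
`dir = false` means `H` (horizontal) and `dir = true` means `V` (vertical);
`temp = true` means `W` (warm) and `temp = false` means `C` (cold);
shades are natural numbers, `black := 0`. -/
inductive Sig : Type where
  | alpha : Sig
  | beta : Sig
  | omega : Sig
  | base : Bool → Bool → Bool → ℕ → Sig
deriving DecidableEq

/-- `c` is a letter of `Σ₀` (its shade belonging to `S`). -/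
def inSigma0 (S : Finset ℕ) : Sig → Prop
  | .base _ _ _ s => s ∈ S
  | _ => False

/-- `c` is a letter of `Σ₀` with the indicated first three components
(its shade ranging over `S`). -/
def isL (S : Finset ℕ) (ab dir temp : Bool) (c : Sig) : Prop :=
  ∃ s ∈ S, c = Sig.base ab dir temp s

/-- All letters of the word `u` belong to `Σ₀`. -/
def allS0 (S : Finset ℕ) (u : List Sig) : Prop := ∀ c ∈ u, inSigma0 S c

/-- `Q¹ = ω`. -/
def Qg1 : Language Sig := {[Sig.omega]}

/-- `Q² = α + β`. -/
def Qg2 : Language Sig := {[Sig.alpha], [Sig.beta]}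

/-- `[B H W][A V W]`, the first summand of `Q³`. -/
def Qg3a (S : Finset ℕ) : Language Sig :=
  { w | ∃ c1 c2, w = [c1, c2] ∧ isL S false false true c1 ∧ isL S true true true c2 }

/-- `[B V C][A H C]`, the second summand of `Q³`. -/
def Qg3b (S : Finset ℕ) : Language Sig :=
  { w | ∃ c1 c2, w = [c1, c2] ∧ isL S false true false c1 ∧ isL S true false false c2 }

/-- `[A H C][B V C]`, the first summand of `Q⁴`. -/
def Qg4a (S : Finset ℕ) : Language Sig :=
  { w | ∃ c1 c2, w = [c1, c2] ∧ isL S true false false c1 ∧ isL S false true false c2 }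

/-- `[A V W][B H W]`, the second summand of `Q⁴`. -/
def Qg4b (S : Finset ℕ) : Language Sig :=
  { w | ∃ c1 c2, w = [c1, c2] ∧ isL S true true true c1 ∧ isL S false false true c2 }

/-- `[B V C]`, the first summand of `Q⁵`. -/
def Qg5a (S : Finset ℕ) : Language Sig := { w | ∃ c, w = [c] ∧ isL S false true false c }

/-- `[B V W]`, the second summand of `Q⁵`. -/
def Qg5b (S : Finset ℕ) : Language Sig := { w | ∃ c, w = [c] ∧ isL S false true true c }

/-- `[B H W]`, the first summand of `Q⁶`. -/
def Qg6a (S : Finset ℕ) : Language Sig := { w | ∃ c, w = [c] ∧ isL S false false true c }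

/-- `[B H C]`, the second summand of `Q⁶`. -/
def Qg6b (S : Finset ℕ) : Language Sig := { w | ∃ c, w = [c] ∧ isL S false false false c }

/-- `[A V W]`, the first summand of `Q⁷`. -/
def Qg7a (S : Finset ℕ) : Language Sig := { w | ∃ c, w = [c] ∧ isL S true true true c }

/-- `[A V C]`, the second summand of `Q⁷`. -/
def Qg7b (S : Finset ℕ) : Language Sig := { w | ∃ c, w = [c] ∧ isL S true true false c }

/-- `[A H C]`, the first summand of `Q⁸`. -/
def Qg8a (S : Finset ℕ) : Language Sig := { w | ∃ c, w = [c] ∧ isL S true false false c }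

/-- `[A H W]`, the second summand of `Q⁸`. -/
def Qg8b (S : Finset ℕ) : Language Sig := { w | ∃ c, w = [c] ∧ isL S true false true c }

/-- `𝒬_good`, the set of 8 good languages. -/
def Qgood (S : Finset ℕ) : Set (Language Sig) :=
  {Qg1, Qg2, Qg3a S + Qg3b S, Qg4a S + Qg4b S, Qg5a S + Qg5b S,
   Qg6a S + Qg6b S, Qg7a S + Qg7b S, Qg8a S + Qg8b S}

/-- `β (Σ_{s ∈ 𝒮∖{black}} [A V W s]) Σ₀* ω`. -/
def Qbad1 (S : Finset ℕ) : Language Sig :=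
  { w | ∃ s u, s ∈ S ∧ s ≠ 0 ∧ allS0 S u ∧
      w = Sig.beta :: Sig.base true true true s :: (u ++ [Sig.omega]) }

/-- `β Σ₀* (Σ_{s ∈ 𝒮∖{black}} [B H W s]) ω`. -/
def Qbad2 (S : Finset ℕ) : Language Sig :=
  { w | ∃ s u, s ∈ S ∧ s ≠ 0 ∧ allS0 S u ∧
      w = Sig.beta :: (u ++ [Sig.base false false true s, Sig.omega]) }

/-- `β Σ₀* [• d W s][• d' W s'] Σ₀* ω`, for a forbidden pair `⟨(d,s),(d',s')⟩`. -/
def QbadF (S : Finset ℕ) (d : Bool) (s : ℕ) (d' : Bool) (s' : ℕ) : Language Sig :=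
  { w | ∃ u u', ∃ b b' : Bool, allS0 S u ∧ allS0 S u' ∧
      w = Sig.beta :: (u ++ Sig.base b d true s :: Sig.base b' d' true s' :: (u' ++ [Sig.omega])) }

/-- `𝒬_bad`. -/
def Qbad (S : Finset ℕ) (F : Finset ((Bool × ℕ) × (Bool × ℕ))) : Set (Language Sig) :=
  {Qbad1 S, Qbad2 S} ∪ { L | ∃ p ∈ F, L = QbadF S p.1.1 p.1.2 p.2.1 p.2.2 }

/-- `α Σ₀* [• • W] Σ₀* ω`. -/
def Qugly1 (S : Finset ℕ) : Language Sig :=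
  { w | ∃ u c u', allS0 S u ∧ allS0 S u' ∧ inSigma0 S c ∧
      (∃ ab d s, c = Sig.base ab d true s) ∧
      w = Sig.alpha :: (u ++ c :: (u' ++ [Sig.omega])) }

/-- `β Σ₀* [• • C] Σ₀* ω`. -/
def Qugly2 (S : Finset ℕ) : Language Sig :=
  { w | ∃ u c u', allS0 S u ∧ allS0 S u' ∧ inSigma0 S c ∧
      (∃ ab d s, c = Sig.base ab d false s) ∧
      w = Sig.beta :: (u ++ c :: (u' ++ [Sig.omega])) }

/-- `𝒬_ugly`. -/
def Qugly (S : Finset ℕ) : Set (Language Sig) := {Qugly1 S, Qugly2 S}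

/-- `𝒬 = 𝒬_good ∪ 𝒬_bad ∪ 𝒬_ugly`. -/
def QQ (S : Finset ℕ) (F : Finset ((Bool × ℕ) × (Bool × ℕ))) : Set (Language Sig) :=
  Qgood S ∪ Qbad S F ∪ Qugly S

/-- `[A H C][B V C]`, the repeated block of `Q_start`. -/
def startBlock (S : Finset ℕ) : Language Sig :=
  { w | ∃ c1 c2, w = [c1, c2] ∧ isL S true false false c1 ∧ isL S false true false c2 }

/-- `Q_start = α ([A H C][B V C])⁺ ω`. -/
def Qstart (S : Finset ℕ) : Language Sig :=
  { w | ∃ u, u ∈ KStar.kstar (startBlock S) ∧ u ≠ [] ∧ w = Sig.alpha :: (u ++ [Sig.omega]) }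

/-- The sum of the languages `QbadF` over all forbidden pairs of `F`. -/
def QbadFSum (S : Finset ℕ) (F : Finset ((Bool × ℕ) × (Bool × ℕ))) : Language Sig :=
  { w | ∃ p ∈ F, w ∈ QbadF S p.1.1 p.1.2 p.2.1 p.2.2 }

/-- `Q₀ = Q_start + Σ_{L ∈ 𝒬_bad ∪ 𝒬_ugly} L`. -/
def Q0L (S : Finset ℕ) (F : Finset ((Bool × ℕ) × (Bool × ℕ))) : Language Sig :=
  Qstart S + Qbad1 S + Qbad2 S + QbadFSum S F + Qugly1 S + Qugly2 S

/-- The alphabet `Σ = {α, β, ω} ∪ Σ₀` of the reduction, as a set of letters. -/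
def SigAlph (S : Finset ℕ) : Set Sig :=
  {Sig.alpha, Sig.beta, Sig.omega} ∪ { c | inSigma0 S c }

/-! ### Auxiliary lemmas -/

section AuxPath
variable {V γ : Type}

theorem pathSat_mono' {D D' : DB V γ} (h : ∀ p c q, D p c q → D' p c q) :
    ∀ {w : List γ} {x y : V}, pathSat D x w y → pathSat D' x w y
  | [], _, _, hp => hp
  | _ :: _, _, _, ⟨z, hz, hp⟩ => ⟨z, h _ _ _ hz, pathSat_mono' h hp⟩

theorem pathSat_append' {D : DB V γ} :
    ∀ {w w' : List γ} {x y z : V}, pathSat D x w y → pathSat D y w' z →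
      pathSat D x (w ++ w') z
  | [], _, _, _, _, hp, hq => by cases hp; exact hq
  | _ :: _, _, _, _, _, ⟨u, hu, hp⟩, hq => ⟨u, hu, pathSat_append' hp hq⟩

theorem pathSat_single' {D : DB V γ} {x y : V} {c : γ} (h : D x c y) :
    pathSat D x [c] y := ⟨y, h, rfl⟩

theorem pathSat_last' {D : DB V γ} :
    ∀ {w : List γ} {x y : V}, pathSat D x w y → w ≠ [] →
      ∃ z c, w.getLast? = some c ∧ D z c y
  | [], _, _, _, h => absurd rfl h
  | [c], x, _, ⟨z, hz, hp⟩, _ => by cases hp; exact ⟨x, c, rfl, hz⟩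
  | c :: c' :: w, _, y, ⟨z, hz, hp⟩, _ => by
      obtain ⟨z', d, hd, he⟩ := pathSat_last' hp (by simp)
      exact ⟨z', d, by simpa using hd, he⟩

theorem getLast?_map' (f : γ → Bool × γ) :
    ∀ (l : List γ), (l.map f).getLast? = l.getLast?.map f
  | [] => rfl
  | [c] => rfl
  | c :: c' :: l => by
      have ih := getLast?_map' f (c' :: l)
      simp only [List.map_cons] at *
      rw [List.getLast?_cons_cons, ih, List.getLast?_cons_cons]

theorem chain_mem' {p : V} {c : γ} {q : V} :
    ∀ (l : List V) (w : List γ), chainOf l w p c q →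
      p ∈ l.dropLast ∧ c ∈ w ∧ q ∈ l.tail
  | u :: v :: vss, d :: w, h => by
    rcases h with ⟨rfl, rfl, rfl⟩ | h
    · exact ⟨by simp, by simp, by simp⟩
    · obtain ⟨h1, h2, h3⟩ := chain_mem' (v :: vss) w h
      refine ⟨?_, List.mem_cons_of_mem _ h2, List.mem_cons_of_mem _ h3⟩
      exact List.mem_cons_of_mem _ h1
  | [], _, h => h.elim
  | [_], _, h => h.elim
  | _ :: _ :: _, [], h => h.elim

theorem chain_head_out' {u : V} :
    ∀ (l : List V) (w : List γ) {c : γ} {q : V}, chainOf (u :: l) w u c q → u ∉ l →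
      w.head? = some c
  | v :: vss, d :: w, c, q, h, hu => by
    rcases h with ⟨-, rfl, rfl⟩ | h
    · rfl
    · exact absurd (List.dropLast_subset _ (chain_mem' (v :: vss) w h).1) hu
  | [], [], _, _, h, _ => h.elim
  | [], _ :: _, _, _, h, _ => h.elim
  | _ :: _, [], _, _, h, _ => h.elim


end AuxPath

section AuxChain
variable {V γ : Type}

theorem chain_prefix'' {p q : V} {c : γ} {y : V} {d : γ} :
    ∀ (l : List V) (w : List γ), chainOf l w p c q →
      chainOf (l ++ [y]) (w ++ [d]) p c q
  | u :: v :: vss, c' :: w, h => by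
    rcases h with ⟨rfl, rfl, rfl⟩ | h
    · exact Or.inl ⟨rfl, rfl, rfl⟩
    · exact Or.inr (chain_prefix'' (v :: vss) w h)
  | [], _, h => h.elim
  | [_], _, h => h.elim
  | _ :: _ :: _, [], h => h.elim

theorem chain1_intro {x y : V} {d : γ} : chainOf (x :: [] ++ [y]) [d] x d y :=
  Or.inl ⟨rfl, rfl, rfl⟩

theorem chain1_elim {x y p q : V} {d c : γ} (h : chainOf (x :: ([] : List V) ++ [y]) [d] p c q) :
    p = x ∧ c = d ∧ q = y := by
  rcases h with h | h
  · exact h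
  · exact h.elim

theorem chain2_intro₁ {x v y : V} {d1 d2 : γ} : chainOf (x :: [v] ++ [y]) [d1, d2] x d1 v :=
  Or.inl ⟨rfl, rfl, rfl⟩

theorem chain2_intro₂ {x v y : V} {d1 d2 : γ} : chainOf (x :: [v] ++ [y]) [d1, d2] v d2 y :=
  Or.inr (Or.inl ⟨rfl, rfl, rfl⟩)

theorem chain_last_in' {y : V} :
    ∀ (vss : List V) (w : List γ) (x : V) {p : V} {c : γ}, vss.length + 1 = w.length →
      chainOf (x :: vss ++ [y]) w p c y → y ∉ x :: vss → w.getLast? = some c := by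
  intro vss
  induction vss with
  | nil =>
    intro w x p c hlen h hy
    match w, hlen with
    | [d], _ =>
      rcases h with ⟨-, rfl, -⟩ | h
      · rfl
      · exact h.elim
  | cons v vss ih =>
    intro w x p c hlen h hy
    match w, hlen with
    | d :: w, hlen =>
      rcases h with ⟨-, rfl, hv⟩ | h
      · exact absurd (by rw [hv]; exact List.mem_cons_of_mem _ List.mem_cons_self) hy
      · have hw : w.length = vss.length + 1 := by simpa using hlen.symm
        have := ih w v (by omega) h (fun hm => hy (List.mem_cons_of_mem _ hm))
        match w, hw with
        | e :: w, _ => rw [List.getLast?_cons_cons]; exact this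

theorem chain_pathSat' {D : DB V γ} :
    ∀ (vss : List V) (w : List γ) (x y : V), vss.length + 1 = w.length →
      (∀ p c q, chainOf (x :: vss ++ [y]) w p c q → D p c q) → pathSat D x w y := by
  intro vss
  induction vss with
  | nil =>
    intro w x y hlen hsub
    match w, hlen with
    | [d], _ => exact ⟨y, hsub x d y chain1_intro, rfl⟩
  | cons v vss ih =>
    intro w x y hlen hsub
    match w, hlen with
    | d :: w, hlen =>
      refine ⟨v, hsub x d v (Or.inl ⟨rfl, rfl, rfl⟩), ih w v y (by simpa using hlen) ?_⟩
      intro p c q h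
      exact hsub p c q (Or.inr h)

end AuxChain

/-! ### Reachability -/

def Reach {V γ : Type} (D : DB V γ) (x y : V) : Prop := ∃ w, pathSat D x w y

theorem Reach.refl' {V γ : Type} (D : DB V γ) (x : V) : Reach D x x := ⟨[], rfl⟩

theorem Reach.mono' {V γ : Type} {D D' : DB V γ} (h : ∀ p c q, D p c q → D' p c q)
    {x y : V} (hr : Reach D x y) : Reach D' x y :=
  let ⟨w, hw⟩ := hr; ⟨w, pathSat_mono' h hw⟩

theorem Reach.head' {V γ : Type} {D : DB V γ} {x y z : V} {c : γ}
    (e : D x c y) (h : Reach D y z) : Reach D x z :=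
  let ⟨w, hw⟩ := h; ⟨c :: w, y, e, hw⟩

theorem Reach.tail' {V γ : Type} {D : DB V γ} {x y z : V} {c : γ}
    (h : Reach D x y) (e : D y c z) : Reach D x z :=
  let ⟨w, hw⟩ := h; ⟨w ++ [c], pathSat_append' hw (pathSat_single' e)⟩

theorem chain_reach_head {V γ : Type} {D : DB V γ} :
    ∀ (rest : List V) (w : List γ) (x : V), rest.length = w.length →
      (∀ p c q, chainOf (x :: rest) w p c q → D p c q) →
      ∀ v ∈ x :: rest, Reach D x v := by
  intro rest
  induction rest with
  | nil =>
    intro w x _ _ v hv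
    rcases List.mem_cons.mp hv with rfl | hv
    · exact Reach.refl' D v
    · exact absurd hv List.not_mem_nil
  | cons u rest ih =>
    intro w x hlen hsub v hv
    match w, hlen with
    | d :: w, hlen =>
      have hedge : D x d u := hsub _ _ _ (Or.inl ⟨rfl, rfl, rfl⟩)
      have ih' := ih w u (by simpa using hlen) (fun p c q h => hsub p c q (Or.inr h))
      rcases List.mem_cons.mp hv with rfl | hv
      · exact Reach.refl' D v
      · exact Reach.head' hedge (ih' v hv)

theorem chain_reach_last {V γ : Type} {D : DB V γ} :
    ∀ (rest : List V) (w : List γ) (x z : V), rest.length = w.length →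
      (x :: rest).getLast? = some z →
      (∀ p c q, chainOf (x :: rest) w p c q → D p c q) →
      ∀ v ∈ x :: rest, Reach D v z := by
  intro rest
  induction rest with
  | nil =>
    intro w x z _ hz _ v hv
    simp only [List.getLast?_singleton, Option.some.injEq] at hz
    rcases List.mem_cons.mp hv with rfl | hv
    · rw [← hz]; exact Reach.refl' D v
    · exact absurd hv List.not_mem_nil
  | cons u rest ih =>
    intro w x z hlen hz hsub v hv
    match w, hlen with
    | d :: w, hlen =>
      have hedge : D x d u := hsub _ _ _ (Or.inl ⟨rfl, rfl, rfl⟩)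
      rw [List.getLast?_cons_cons] at hz
      have ih' := ih w u z (by simpa using hlen) hz (fun p c q h => hsub p c q (Or.inr h))
      rcases List.mem_cons.mp hv with rfl | hv
      · exact Reach.head' hedge (ih' u List.mem_cons_self)
      · exact ih' v hv

/-! ### Classification of the good languages -/

def Allowed (S : Finset ℕ) (c : Sig) : Prop :=
  c = Sig.alpha ∨ c = Sig.beta ∨ c = Sig.omega ∨ ∃ ab d t s, s ∈ S ∧ c = Sig.base ab d t s

def BaseS (S : Finset ℕ) (c : Sig) : Prop := ∃ ab d t s, s ∈ S ∧ c = Sig.base ab d t s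

theorem baseS_of_isL {S : Finset ℕ} {ab d t : Bool} {c : Sig} (h : isL S ab d t c) :
    BaseS S c := by
  obtain ⟨s, hs, rfl⟩ := h
  exact ⟨ab, d, t, s, hs, rfl⟩

theorem good_class {S : Finset ℕ} {L : Language Sig} (hL : L ∈ Qgood S) :
    (∀ u ∈ L, u = [Sig.omega]) ∨
    (∀ u ∈ L, u = [Sig.alpha] ∨ u = [Sig.beta]) ∨
    (∀ u ∈ L, ∃ c, u = [c] ∧ BaseS S c) ∨
    (∀ u ∈ L, ∃ c1 c2, u = [c1, c2] ∧ BaseS S c1 ∧ BaseS S c2) := by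
  simp only [Qgood, Set.mem_insert_iff, Set.mem_singleton_iff] at hL
  rcases hL with rfl | rfl | rfl | rfl | rfl | rfl | rfl | rfl
  · exact Or.inl fun u hu => hu
  · exact Or.inr (Or.inl fun u hu => hu)
  · refine Or.inr (Or.inr (Or.inr fun u hu => ?_))
    rcases hu with ⟨c1, c2, rfl, h1, h2⟩ | ⟨c1, c2, rfl, h1, h2⟩ <;>
      exact ⟨c1, c2, rfl, baseS_of_isL h1, baseS_of_isL h2⟩
  · refine Or.inr (Or.inr (Or.inr fun u hu => ?_))
    rcases hu with ⟨c1, c2, rfl, h1, h2⟩ | ⟨c1, c2, rfl, h1, h2⟩ <;>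
      exact ⟨c1, c2, rfl, baseS_of_isL h1, baseS_of_isL h2⟩
  all_goals
    refine Or.inr (Or.inr (Or.inl fun u hu => ?_))
    rcases hu with ⟨c, rfl, h⟩ | ⟨c, rfl, h⟩ <;> exact ⟨c, rfl, baseS_of_isL h⟩

theorem good_ne_nil {S : Finset ℕ} {L : Language Sig} (hL : L ∈ Qgood S) {u : List Sig}
    (hu : u ∈ L) : u ≠ [] := by
  rcases good_class hL with h | h | h | h
  · rw [h u hu]; simp
  · rcases h u hu with rfl | rfl <;> simp
  · obtain ⟨c, rfl, -⟩ := h u hu; simp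
  · obtain ⟨c1, c2, rfl, -, -⟩ := h u hu; simp

theorem good_allowed {S : Finset ℕ} {L : Language Sig} (hL : L ∈ Qgood S) {u : List Sig}
    (hu : u ∈ L) : ∀ c ∈ u, Allowed S c := by
  intro c hc
  rcases good_class hL with h | h | h | h
  · rw [h u hu] at hc; simp at hc; subst hc; exact Or.inr (Or.inr (Or.inl rfl))
  · rcases h u hu with rfl | rfl <;> simp at hc <;> subst hc
    · exact Or.inl rfl
    · exact Or.inr (Or.inl rfl)
  · obtain ⟨c', rfl, hb⟩ := h u hu
    simp at hc; subst hc; exact Or.inr (Or.inr (Or.inr hb))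
  · obtain ⟨c1, c2, rfl, hb1, hb2⟩ := h u hu
    simp at hc
    rcases hc with rfl | rfl
    · exact Or.inr (Or.inr (Or.inr hb1))
    · exact Or.inr (Or.inr (Or.inr hb2))

theorem allowed_cover {S : Finset ℕ} {c : Sig} (hc : Allowed S c) :
    ∃ L, L ∈ Qgood S ∧ [c] ∈ L ∧ ∀ u ∈ L, ∃ c', u = [c'] := by
  have mem : ∀ L, L = Qg1 ∨ L = Qg2 ∨ L = Qg3a S + Qg3b S ∨ L = Qg4a S + Qg4b S ∨
      L = Qg5a S + Qg5b S ∨ L = Qg6a S + Qg6b S ∨ L = Qg7a S + Qg7b S ∨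
      L = Qg8a S + Qg8b S → L ∈ Qgood S := by
    intro L h
    simp only [Qgood, Set.mem_insert_iff, Set.mem_singleton_iff]
    exact h
  rcases hc with rfl | rfl | rfl | ⟨ab, d, t, s, hs, rfl⟩
  · refine ⟨Qg2, mem _ (Or.inr (Or.inl rfl)), Or.inl rfl, fun u hu => ?_⟩
    rcases hu with rfl | rfl
    · exact ⟨_, rfl⟩
    · exact ⟨_, rfl⟩
  · refine ⟨Qg2, mem _ (Or.inr (Or.inl rfl)), Or.inr rfl, fun u hu => ?_⟩
    rcases hu with rfl | rfl
    · exact ⟨_, rfl⟩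
    · exact ⟨_, rfl⟩
  · refine ⟨Qg1, mem _ (Or.inl rfl), rfl, fun u hu => ?_⟩
    rw [hu]; exact ⟨_, rfl⟩
  · have single : ∀ (L1 L2 : Language Sig),
        (∀ u ∈ L1, ∃ c', (u = [c'] ∧ True)) → (∀ u ∈ L2, ∃ c', (u = [c'] ∧ True)) →
        ∀ u ∈ L1 + L2, ∃ c', u = [c'] := by
      intro L1 L2 h1 h2 u hu
      rcases hu with hu | hu
      · obtain ⟨c', hc', -⟩ := h1 u hu; exact ⟨c', hc'⟩
      · obtain ⟨c', hc', -⟩ := h2 u hu; exact ⟨c', hc'⟩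
    match ab, d with
    | true, false =>
      refine ⟨Qg8a S + Qg8b S, mem _ (by tauto), ?_, single _ _ ?_ ?_⟩
      · match t with
        | false => exact Or.inl ⟨_, rfl, s, hs, rfl⟩
        | true => exact Or.inr ⟨_, rfl, s, hs, rfl⟩
      · rintro u ⟨c, rfl, -⟩; exact ⟨c, rfl, trivial⟩
      · rintro u ⟨c, rfl, -⟩; exact ⟨c, rfl, trivial⟩
    | true, true =>
      refine ⟨Qg7a S + Qg7b S, mem _ (by tauto), ?_, single _ _ ?_ ?_⟩
      · match t with
        | true => exact Or.inl ⟨_, rfl, s, hs, rfl⟩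
        | false => exact Or.inr ⟨_, rfl, s, hs, rfl⟩
      · rintro u ⟨c, rfl, -⟩; exact ⟨c, rfl, trivial⟩
      · rintro u ⟨c, rfl, -⟩; exact ⟨c, rfl, trivial⟩
    | false, false =>
      refine ⟨Qg6a S + Qg6b S, mem _ (by tauto), ?_, single _ _ ?_ ?_⟩
      · match t with
        | true => exact Or.inl ⟨_, rfl, s, hs, rfl⟩
        | false => exact Or.inr ⟨_, rfl, s, hs, rfl⟩
      · rintro u ⟨c, rfl, -⟩; exact ⟨c, rfl, trivial⟩
      · rintro u ⟨c, rfl, -⟩; exact ⟨c, rfl, trivial⟩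
    | false, true =>
      refine ⟨Qg5a S + Qg5b S, mem _ (by tauto), ?_, single _ _ ?_ ?_⟩
      · match t with
        | false => exact Or.inl ⟨_, rfl, s, hs, rfl⟩
        | true => exact Or.inr ⟨_, rfl, s, hs, rfl⟩
      · rintro u ⟨c, rfl, -⟩; exact ⟨c, rfl, trivial⟩
      · rintro u ⟨c, rfl, -⟩; exact ⟨c, rfl, trivial⟩

/-! ### The invariant maintained along the play -/

structure GInv {V : Type} (S : Finset ℕ) (a b x₁ xₙ : V) (D : DB V (Bool × Sig)) : Prop where
  labels : ∀ p c q, D p c q → Allowed S c.2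
  noInA : ∀ p c, ¬ D p c a
  noOutB : ∀ c q, ¬ D b c q
  outA : ∀ c q, D a c q → c.2 = Sig.alpha ∨ c.2 = Sig.beta
  inB : ∀ p c, D p c b → c.2 = Sig.omega
  actA : activeV D a
  actB : activeV D b
  reach : ∀ v, activeV D v → (v ≠ a → Reach D x₁ v) ∧ (v ≠ b → Reach D v xₙ)

/-- In a final position `H` of a play obeying Principles I and II,
whose initial chain has vertices `a, x₁, …, xₙ, b` in path order (the internal vertices
being listed by `vs`, so `x₁ = vs.head` and `xₙ = vs.getLast`), every vertex `y ≠ a` of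
`H` is reachable from `x₁` both by a red path and by a green path, and from every vertex
`y ≠ b` of `H` the vertex `xₙ` is reachable both by a red path and by a green path. -/
theorem all_paths (S : Finset ℕ) (F : Finset ((Bool × ℕ) × (Bool × ℕ)))
    (hS : 0 ∈ S) (hF : ∀ p ∈ F, p.1.2 ∈ S ∧ p.2.2 ∈ S)
    {V : Type} (a b : V) (q : List Sig) (hq : q ∈ Qstart S)
    (vs : List V) (hvs : vs ≠ [])
    (hlen : vs.length + 1 = (greenW q).length)
    (hnd : (a :: vs ++ [b]).Nodup)
    (seq : ℕ → DB V (Bool × Sig))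
    (h0 : ∀ p c r, seq 0 p c r ↔ chainOf (a :: vs ++ [b]) (greenW q) p c r)
    (hstep : ∀ i, Step (biRC (QQ S F)) (seq i) (seq (i + 1)))
    (hPII : ∀ i x y, ∀ L ∈ Qbad S F ∪ Qugly S,
      ¬ langSat (seq i) (greenL L) x y ∧ ¬ langSat (seq i) (redL L) x y)
    (H : DB V (Bool × Sig)) (hH : ∀ p c r, H p c r ↔ ∃ i, seq i p c r) :
    ∀ y : V, activeV H y →
      (y ≠ a →
        (∃ w : List Sig, pathSat H (vs.head hvs) (redW w) y) ∧
        (∃ w : List Sig, pathSat H (vs.head hvs) (greenW w) y)) ∧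
      (y ≠ b →
        (∃ w : List Sig, pathSat H y (redW w) (vs.getLast hvs)) ∧
        (∃ w : List Sig, pathSat H y (greenW w) (vs.getLast hvs))) := by
  classical
  obtain ⟨us, hus, husne, rfl⟩ := hq
  obtain ⟨x1, vs', rfl⟩ : ∃ x1 vs', vs = x1 :: vs' := by
    cases vs with
    | nil => exact absurd rfl hvs
    | cons x1 vs' => exact ⟨x1, vs', rfl⟩
  set q : List Sig := Sig.alpha :: (us ++ [Sig.omega]) with hqdef
  set vs : List V := x1 :: vs' with hvsdef
  set xN : V := vs.getLast (by simp [hvsdef]) with hxNdef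
  have hx1 : vs.head hvs = x1 := rfl
  have hxN : vs.getLast hvs = xN := rfl
  -- lengths
  have hlen' : vs.length + 1 = q.length := by simpa [greenW] using hlen
  have hlenu : vs'.length = us.length := by simp [hvsdef, hqdef] at hlen'; omega
  -- nodup facts
  have hand : a ∉ vs ++ [b] := (List.nodup_cons.mp hnd).1
  have hnd' : (vs ++ [b]).Nodup := (List.nodup_cons.mp hnd).2
  have hbvs : b ∉ vs := by
    intro hb
    have := List.disjoint_of_nodup_append hnd'
    exact this hb (List.mem_singleton_self b)
  have hab : a ≠ b := by
    intro h
    exact hand (by simp [h])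
  have havs : a ∉ vs := fun h => hand (List.mem_append_left [b] h)
  -- monotonicity
  have hmono1 : ∀ i p c r, seq i p c r → seq (i + 1) p c r := by
    intro i p c r h
    obtain ⟨wch, vch, h1, h2, h3⟩ := hstep i
    exact (h3 p c r).mpr (Or.inl h)
  have hmono : ∀ i j, i ≤ j → ∀ p c r, seq i p c r → seq j p c r := by
    intro i j hij
    induction hij with
    | refl => exact fun p c r h => h
    | step _ ih => intro p c r h; exact hmono1 _ p c r (ih p c r h)
  have hseqH : ∀ i p c r, seq i p c r → H p c r := fun i p c r h => (hH p c r).mpr ⟨i, h⟩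
  -- letters of q are allowed
  have hqall : ∀ c ∈ q, Allowed S c := by
    intro c hc
    rw [hqdef] at hc
    rcases List.mem_cons.mp hc with rfl | hc
    · exact Or.inl rfl
    rcases List.mem_append.mp hc with hc | hc
    · rw [Language.mem_kstar] at hus
      obtain ⟨ws, rfl, hws⟩ := hus
      obtain ⟨w, hw, hcw⟩ := List.mem_flatten.mp hc
      obtain ⟨c1, c2, rfl, h1, h2⟩ := hws w hw
      simp only [List.mem_cons, List.not_mem_nil, or_false] at hcw
      rcases hcw with rfl | rfl
      · exact Or.inr (Or.inr (Or.inr (baseS_of_isL h1)))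
      · exact Or.inr (Or.inr (Or.inr (baseS_of_isL h2)))
    · simp at hc; subst hc
      exact Or.inr (Or.inr (Or.inl rfl))
  -- base case of the invariant
  have hsub0 : ∀ p c r, chainOf (a :: vs ++ [b]) (greenW q) p c r → seq 0 p c r :=
    fun p c r h => (h0 p c r).mpr h
  have hgq : greenW q = (true, Sig.alpha) :: (greenW us ++ [(true, Sig.omega)]) := by
    simp [greenW, hqdef]
  have hInv0 : GInv S a b x1 xN (seq 0) := by
    have tailEq : (a :: vs ++ [b]).tail = vs ++ [b] := rfl
    have dropEq : (a :: vs ++ [b]).dropLast = a :: vs := by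
      rw [show a :: vs ++ [b] = (a :: vs) ++ [b] from rfl, List.dropLast_concat]
    have hglast : (greenW q).getLast? = some (true, Sig.omega) := by
      rw [hgq, show (true, Sig.alpha) :: (greenW us ++ [(true, Sig.omega)]) =
        ((true, Sig.alpha) :: greenW us) ++ [(true, Sig.omega)] from rfl, List.getLast?_concat]
    have hbav : b ∉ a :: vs := by
      intro h
      rcases List.mem_cons.mp h with h | h
      · exact hab h.symm
      · exact hbvs h
    constructor
    · -- labels
      intro p c r h
      obtain ⟨d, hd, rfl⟩ := List.mem_map.mp (chain_mem' _ _ ((h0 p c r).mp h)).2.1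
      exact hqall d hd
    · -- noInA
      intro p c h
      have := (chain_mem' _ _ ((h0 p c a).mp h)).2.2
      rw [tailEq] at this
      exact hand this
    · -- noOutB
      intro c r h
      have := (chain_mem' _ _ ((h0 b c r).mp h)).1
      rw [dropEq] at this
      exact hbav this
    · -- outA
      intro c r h
      have := chain_head_out' _ _ ((h0 a c r).mp h) hand
      rw [hgq] at this
      simp only [List.head?_cons, Option.some.injEq] at this
      rw [← this]
      exact Or.inl rfl
    · -- inB
      intro p c h
      have := chain_last_in' vs (greenW q) a hlen ((h0 p c b).mp h) hbav
      rw [hglast] at this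
      simp only [Option.some.injEq] at this
      rw [← this]
    · -- actA
      exact ⟨(true, Sig.alpha), x1, Or.inl (hsub0 a _ x1 (Or.inl ⟨rfl, rfl, rfl⟩))⟩
    · -- actB
      have hpath : pathSat (seq 0) a (greenW q) b := chain_pathSat' vs (greenW q) a b hlen hsub0
      obtain ⟨z, c, -, e⟩ := pathSat_last' hpath (by rw [hgq]; simp)
      exact ⟨c, z, Or.inr e⟩
    · -- reach
      intro v hv
      have hvmem : v ∈ a :: vs ++ [b] := by
        obtain ⟨c, u, e | e⟩ := hv
        · exact List.dropLast_subset _ (chain_mem' _ _ ((h0 v c u).mp e)).1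
        · have := (chain_mem' _ _ ((h0 u c v).mp e)).2.2
          rw [tailEq] at this
          exact List.mem_cons_of_mem _ this
      constructor
      · intro hva
        have sub : ∀ p c r, chainOf (x1 :: vs' ++ [b]) (greenW (us ++ [Sig.omega])) p c r →
            seq 0 p c r := fun p c r h => hsub0 p c r (Or.inr h)
        have mem : v ∈ x1 :: vs' ++ [b] := by
          rcases List.mem_cons.mp hvmem with rfl | h
          · exact absurd rfl hva
          · exact h
        exact chain_reach_head (vs' ++ [b]) (greenW (us ++ [Sig.omega])) x1
          (by simp [greenW, hlenu]) sub v mem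
      · intro hvb
        have sub2 : ∀ p c r, chainOf (a :: vs) (greenW (Sig.alpha :: us)) p c r →
            seq 0 p c r := by
          intro p c r h
          have h2 := chain_prefix'' (y := b) (d := (true, Sig.omega)) (a :: vs)
            (greenW (Sig.alpha :: us)) h
          rw [show greenW (Sig.alpha :: us) ++ [(true, Sig.omega)] = greenW q by
            simp [greenW, hqdef]] at h2
          exact hsub0 p c r h2
        have mem2 : v ∈ a :: vs := by
          rcases List.mem_cons.mp hvmem with rfl | h
          · exact List.mem_cons_self
          · rcases List.mem_append.mp h with h | h
            · exact List.mem_cons_of_mem _ h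
            · simp at h; exact absurd h hvb
        have lastEq : (a :: vs).getLast? = some xN := by
          rw [show a :: vs = a :: x1 :: vs' from rfl, List.getLast?_cons_cons]
          exact List.getLast?_eq_getLast _
        exact chain_reach_last vs (greenW (Sig.alpha :: us)) a xN
          (by rw [hvsdef]; simp [greenW, hlenu]) lastEq sub2 v mem2
  -- the invariant is preserved
  have hstepInv : ∀ i, GInv S a b x1 xN (seq i) → GInv S a b x1 xN (seq (i + 1)) := by
    intro i inv
    obtain ⟨wch, vch, h1, h2, h3⟩ := hstep i
    have dl : ∀ (x y : V) (l : List V), (x :: l ++ [y]).dropLast = x :: l := by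
      intro x y l
      rw [show x :: l ++ [y] = (x :: l) ++ [y] from rfl, List.dropLast_concat]
    have hnew : ∀ p c r, seq (i + 1) p c r → seq i p c r ∨
        ∃ rr ∈ rq (biRC (QQ S F)) (seq i), chainOf (rr.1 :: vch rr ++ [rr.2.1]) (wch rr) p c r :=
      fun p c r h => (h3 p c r).mp h
    have hreq : ∀ r ∈ rq (biRC (QQ S F)) (seq i), ∃ L, L ∈ Qgood S ∧
        (r.2.2.rhs = greenL L ∨ r.2.2.rhs = redL L) ∧
        ∃ col u', u' ∈ L ∧ pathSat (seq i) r.1 (List.map (fun c => (col, c)) u') r.2.1 := by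
      rintro r ⟨ht, hl, -⟩
      rcases ht with ⟨L, hLQ, ht⟩ | ⟨L, hLQ, ht⟩
      · rw [← ht] at hl
        obtain ⟨w, ⟨u', hu', rfl⟩, hp⟩ := hl
        have hLg : L ∈ Qgood S := by
          rcases hLQ with (hLg | hLb) | hLu
          · exact hLg
          · exact absurd ⟨greenW u', ⟨u', hu', rfl⟩, hp⟩ (hPII i r.1 r.2.1 L (Or.inl hLb)).1
          · exact absurd ⟨greenW u', ⟨u', hu', rfl⟩, hp⟩ (hPII i r.1 r.2.1 L (Or.inr hLu)).1
        exact ⟨L, hLg, Or.inr (by rw [← ht]; rfl), true, u', hu', hp⟩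
      · rw [← ht] at hl
        obtain ⟨w, ⟨u', hu', rfl⟩, hp⟩ := hl
        have hLg : L ∈ Qgood S := by
          rcases hLQ with (hLg | hLb) | hLu
          · exact hLg
          · exact absurd ⟨redW u', ⟨u', hu', rfl⟩, hp⟩ (hPII i r.1 r.2.1 L (Or.inl hLb)).2
          · exact absurd ⟨redW u', ⟨u', hu', rfl⟩, hp⟩ (hPII i r.1 r.2.1 L (Or.inr hLu)).2
        exact ⟨L, hLg, Or.inl (by rw [← ht]; rfl), false, u', hu', hp⟩
    have hact : ∀ rr ∈ rq (biRC (QQ S F)) (seq i),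
        activeV (seq i) rr.1 ∧ activeV (seq i) rr.2.1 := by
      intro rr hrr
      obtain ⟨L, hLg, -, col, u', hu', hp⟩ := hreq rr hrr
      have hne : (List.map (fun c => (col, c)) u') ≠ [] := by
        intro hh
        exact good_ne_nil hLg hu' (by simpa using hh)
      constructor
      · obtain ⟨d, u'', rfl⟩ : ∃ d u'', u' = d :: u'' := by
          cases u' with
          | nil => exact absurd rfl (good_ne_nil hLg hu')
          | cons d u'' => exact ⟨d, u'', rfl⟩
        obtain ⟨z, e, -⟩ := hp
        exact ⟨_, z, Or.inl e⟩
      · obtain ⟨z, c0, -, e⟩ := pathSat_last' hp hne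
        exact ⟨c0, z, Or.inr e⟩
    -- the rhs word of a request
    have hrhsw : ∀ rr ∈ rq (biRC (QQ S F)) (seq i), ∀ L, L ∈ Qgood S →
        (rr.2.2.rhs = greenL L ∨ rr.2.2.rhs = redL L) →
        ∃ colr u0, u0 ∈ L ∧ wch rr = List.map (fun c => (colr, c)) u0 := by
      intro rr hrr L hLg hrhs
      have hw1 := (h1 rr hrr).1
      rcases hrhs with hrhs | hrhs <;> rw [hrhs] at hw1
      · obtain ⟨u0, hu0, heq⟩ := hw1
        exact ⟨true, u0, hu0, heq.symm⟩
      · obtain ⟨u0, hu0, heq⟩ := hw1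
        exact ⟨false, u0, hu0, heq.symm⟩
    constructor
    · -- labels
      intro p c r h
      rcases hnew p c r h with h | ⟨rr, hrr, hch⟩
      · exact inv.labels p c r h
      obtain ⟨L, hLg, hrhs, -⟩ := hreq rr hrr
      obtain ⟨colr, u0, hu0, hweq⟩ := hrhsw rr hrr L hLg hrhs
      have hcw : c ∈ wch rr := (chain_mem' _ _ hch).2.1
      rw [hweq] at hcw
      obtain ⟨d, hd, rfl⟩ := List.mem_map.mp hcw
      exact good_allowed hLg hu0 d hd
    · -- noInA
      intro p c h
      rcases hnew p c a h with h | ⟨rr, hrr, hch⟩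
      · exact inv.noInA p c h
      have hm := (chain_mem' _ _ hch).2.2
      rcases List.mem_append.mp hm with hv | hv
      · exact ((h1 rr hrr).2.2.2 a hv).1 inv.actA
      · simp only [List.mem_singleton] at hv
        obtain ⟨L, hLg, -, col, u', hu', hp⟩ := hreq rr hrr
        have hne : (List.map (fun c => (col, c)) u') ≠ [] := by
          intro hh
          exact good_ne_nil hLg hu' (by simpa using hh)
        obtain ⟨z, c0, -, e⟩ := pathSat_last' hp hne
        rw [← hv] at e
        exact inv.noInA z c0 e
    · -- noOutB
      intro c r h
      rcases hnew b c r h with h | ⟨rr, hrr, hch⟩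
      · exact inv.noOutB c r h
      have hm := (chain_mem' _ _ hch).1
      rw [dl] at hm
      rcases List.mem_cons.mp hm with hv | hv
      · obtain ⟨L, hLg, -, col, u', hu', hp⟩ := hreq rr hrr
        obtain ⟨d, u'', rfl⟩ : ∃ d u'', u' = d :: u'' := by
          cases u' with
          | nil => exact absurd rfl (good_ne_nil hLg hu')
          | cons d u'' => exact ⟨d, u'', rfl⟩
        obtain ⟨z, e, -⟩ := hp
        rw [← hv] at e
        exact inv.noOutB _ _ e
      · exact ((h1 rr hrr).2.2.2 b hv).1 inv.actB
    · -- outA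
      intro c r h
      rcases hnew a c r h with h | ⟨rr, hrr, hch⟩
      · exact inv.outA c r h
      have hm := (chain_mem' _ _ hch).1
      rw [dl] at hm
      have hva : rr.1 = a := by
        rcases List.mem_cons.mp hm with hv | hv
        · exact hv.symm
        · exact absurd inv.actA ((h1 rr hrr).2.2.2 a hv).1
      obtain ⟨L, hLg, hrhs, col, u', hu', hp⟩ := hreq rr hrr
      obtain ⟨d, u'', rfl⟩ : ∃ d u'', u' = d :: u'' := by
        cases u' with
        | nil => exact absurd rfl (good_ne_nil hLg hu')
        | cons d u'' => exact ⟨d, u'', rfl⟩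
      obtain ⟨z, e, -⟩ := hp
      rw [hva] at e
      have hd : d = Sig.alpha ∨ d = Sig.beta := inv.outA _ _ e
      -- classify L
      rcases good_class hLg with hcl | hcl | hcl | hcl
      · exfalso
        have := hcl _ hu'
        rcases hd with rfl | rfl <;> simp at this
      · -- L consists of [α] and [β]
        obtain ⟨colr, u0, hu0, hweq⟩ := hrhsw rr hrr L hLg hrhs
        have hw2 := (h1 rr hrr).2.1
        rw [hweq] at hw2
        have hvch : vch rr = [] := by
          rcases hcl u0 hu0 with rfl | rfl <;> (simp at hw2; exact hw2)
        rw [hvch, hweq] at hch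
        rcases hcl u0 hu0 with rfl | rfl
        · obtain ⟨-, rfl, -⟩ := chain1_elim hch
          exact Or.inl rfl
        · obtain ⟨-, rfl, -⟩ := chain1_elim hch
          exact Or.inr rfl
      · exfalso
        obtain ⟨c0, hequ, ⟨ab, dd, tt, s, -, rfl⟩⟩ := hcl _ hu'
        have : d = Sig.base ab dd tt s := by
          simpa using congrArg (fun l => l.head?) hequ
        rcases hd with rfl | rfl <;> simp at this
      · exfalso
        obtain ⟨c1, c2, hequ, ⟨ab, dd, tt, s, -, rfl⟩, -⟩ := hcl _ hu'
        have : d = Sig.base ab dd tt s := by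
          simpa using congrArg (fun l => l.head?) hequ
        rcases hd with rfl | rfl <;> simp at this
    · -- inB
      intro p c h
      rcases hnew p c b h with h | ⟨rr, hrr, hch⟩
      · exact inv.inB p c h
      have hm := (chain_mem' _ _ hch).2.2
      have hvb : rr.2.1 = b := by
        rcases List.mem_append.mp hm with hv | hv
        · exact absurd inv.actB ((h1 rr hrr).2.2.2 b hv).1
        · exact (List.mem_singleton.mp hv).symm
      obtain ⟨L, hLg, hrhs, col, u', hu', hp⟩ := hreq rr hrr
      have hne : (List.map (fun c => (col, c)) u') ≠ [] := by
        intro hh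
        exact good_ne_nil hLg hu' (by simpa using hh)
      obtain ⟨z, c0, hlst, e⟩ := pathSat_last' hp hne
      rw [getLast?_map'] at hlst
      obtain ⟨d0, hd0, rfl⟩ := Option.map_eq_some_iff.mp hlst
      rw [hvb] at e
      have hdo : d0 = Sig.omega := inv.inB _ _ e
      subst hdo
      -- classify
      rcases good_class hLg with hcl | hcl | hcl | hcl
      · obtain ⟨colr, u0, hu0, hweq⟩ := hrhsw rr hrr L hLg hrhs
        have hw2 := (h1 rr hrr).2.1
        rw [hweq] at hw2
        have hu0e := hcl u0 hu0
        subst hu0e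
        have hvch : vch rr = [] := by
          simp at hw2
          exact hw2
        rw [hvch, hweq] at hch
        obtain ⟨-, rfl, -⟩ := chain1_elim hch
        rfl
      · exfalso
        rcases hcl _ hu' with he' | he' <;> rw [he'] at hd0 <;> simp at hd0
      · exfalso
        obtain ⟨c0, he', ⟨ab, dd, tt, s, -, rfl⟩⟩ := hcl _ hu'
        rw [he'] at hd0
        simp at hd0
      · exfalso
        obtain ⟨c1, c2, he', -, ⟨ab, dd, tt, s, -, rfl⟩⟩ := hcl _ hu'
        rw [he'] at hd0
        simp at hd0
    · -- actA
      obtain ⟨c, u, e | e⟩ := inv.actA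
      · exact ⟨c, u, Or.inl (hmono1 i _ _ _ e)⟩
      · exact ⟨c, u, Or.inr (hmono1 i _ _ _ e)⟩
    · -- actB
      obtain ⟨c, u, e | e⟩ := inv.actB
      · exact ⟨c, u, Or.inl (hmono1 i _ _ _ e)⟩
      · exact ⟨c, u, Or.inr (hmono1 i _ _ _ e)⟩
    · -- reach
      intro v hv
      have hcase : activeV (seq i) v ∨
          ∃ rr, ∃ _ : rr ∈ rq (biRC (QQ S F)) (seq i), v ∈ vch rr := by
        obtain ⟨c, u, e | e⟩ := hv
        · rcases hnew v c u e with h | ⟨rr, hrr, hch⟩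
          · exact Or.inl ⟨c, u, Or.inl h⟩
          · have hm := (chain_mem' _ _ hch).1
            rw [dl] at hm
            rcases List.mem_cons.mp hm with rfl | hm
            · exact Or.inl (hact rr hrr).1
            · exact Or.inr ⟨rr, hrr, hm⟩
        · rcases hnew u c v e with h | ⟨rr, hrr, hch⟩
          · exact Or.inl ⟨c, u, Or.inr h⟩
          · have hm := (chain_mem' _ _ hch).2.2
            rcases List.mem_append.mp hm with hm | hm
            · exact Or.inr ⟨rr, hrr, hm⟩
            · simp only [List.mem_singleton] at hm
              subst hm
              exact Or.inl (hact rr hrr).2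
      rcases hcase with hv' | ⟨rr, hrr, hm⟩
      · have := inv.reach v hv'
        exact ⟨fun h => Reach.mono' (hmono1 i) (this.1 h),
               fun h => Reach.mono' (hmono1 i) (this.2 h)⟩
      · obtain ⟨L, hLg, hrhs, col, u', hu', hp⟩ := hreq rr hrr
        obtain ⟨colr, u0, hu0, hweq⟩ := hrhsw rr hrr L hLg hrhs
        have hw2 := (h1 rr hrr).2.1
        rw [hweq] at hw2
        have hvne : vch rr ≠ [] := by
          intro hh
          rw [hh] at hm
          exact List.not_mem_nil hm
        rcases good_class hLg with hcl | hcl | hcl | hcl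
        · exfalso
          have := hcl u0 hu0
          subst this
          simp at hw2
          exact hvne (hw2)
        · exfalso
          rcases hcl u0 hu0 with rfl | rfl <;>
            (simp at hw2; exact hvne (hw2))
        · exfalso
          obtain ⟨c0, rfl, -⟩ := hcl u0 hu0
          simp at hw2
          exact hvne (hw2)
        · obtain ⟨e1, e2, rfl, -, -⟩ := hcl u0 hu0
          simp at hw2
          obtain ⟨v0, hv0⟩ := List.length_eq_one_iff.mp hw2
          rw [hv0] at hm
          simp only [List.mem_singleton] at hm
          subst hm
          obtain ⟨d1, d2, rfl, hb1, hb2⟩ := hcl u' hu'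
          obtain ⟨z1, ea, z2, eb, hz2⟩ := hp
          cases hz2
          have hxa : rr.1 ≠ a := by
            intro hh
            rw [hh] at ea
            obtain ⟨ab, dd, tt, s, -, rfl⟩ := hb1
            rcases inv.outA _ _ ea with h | h <;> exact Sig.noConfusion h
          have hyb : rr.2.1 ≠ b := by
            intro hh
            rw [hh] at eb
            obtain ⟨ab, dd, tt, s, -, rfl⟩ := hb2
            exact Sig.noConfusion (inv.inB _ _ eb)
          have hrx : Reach (seq (i + 1)) x1 rr.1 :=
            Reach.mono' (hmono1 i) ((inv.reach rr.1 (hact rr hrr).1).1 hxa)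
          have hry : Reach (seq (i + 1)) rr.2.1 xN :=
            Reach.mono' (hmono1 i) ((inv.reach rr.2.1 (hact rr hrr).2).2 hyb)
          have e1' : seq (i + 1) rr.1 (colr, e1) v :=
            (h3 _ _ _).mpr (Or.inr ⟨rr, hrr, by rw [hv0, hweq]; exact chain2_intro₁⟩)
          have e2' : seq (i + 1) v (colr, e2) rr.2.1 :=
            (h3 _ _ _).mpr (Or.inr ⟨rr, hrr, by rw [hv0, hweq]; exact chain2_intro₂⟩)
          exact ⟨fun _ => Reach.tail' hrx e1', fun _ => Reach.head' e2' hry⟩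
  have hInv : ∀ i, GInv S a b x1 xN (seq i) := by
    intro i
    induction i with
    | zero => exact hInv0
    | succ i ih => exact hstepInv i ih
  -- every H-edge has a red and a green parallel edge
  have hQQg : ∀ L, L ∈ Qgood S → L ∈ QQ S F := fun L h => Or.inl (Or.inl h)
  have hopp : ∀ p c r, H p c r → (∃ c', H p (false, c') r) ∧ (∃ c'', H p (true, c'') r) := by
    intro p c r h
    obtain ⟨i, he⟩ := (hH p c r).mp h
    obtain ⟨col, d⟩ := c
    have hall : Allowed S d := (hInv i).labels p (col, d) r he
    obtain ⟨L, hLg, hdL, hsingle⟩ := allowed_cover hall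
    have fire : ∀ t : RCon (Bool × Sig), t ∈ biRC (QQ S F) →
        langSat (seq i) t.lhs p r → (∀ u ∈ t.rhs, ∃ c', u = [c']) →
        ∃ c', [c'] ∈ t.rhs ∧ H p c' r := by
      intro t ht hl hsing
      by_cases hrs : langSat (seq i) t.rhs p r
      · obtain ⟨w, hw, hpw⟩ := hrs
        obtain ⟨c', rfl⟩ := hsing w hw
        obtain ⟨z, e, hzr⟩ := hpw
        cases hzr
        exact ⟨c', hw, hseqH i _ _ _ e⟩
      · have hrq : (p, r, t) ∈ rq (biRC (QQ S F)) (seq i) := ⟨ht, hl, hrs⟩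
        obtain ⟨wch, vch, h1, h2, h3⟩ := hstep i
        obtain ⟨hw1, hw2, -, -⟩ := h1 _ hrq
        obtain ⟨c', hc'⟩ := hsing _ hw1
        have hv : vch (p, r, t) = [] := by
          rw [hc'] at hw2
          simpa using hw2
        have e : seq (i + 1) p c' r := (h3 p c' r).mpr (Or.inr ⟨(p, r, t), hrq, by
          rw [hv, hc']
          exact chain1_intro⟩)
        exact ⟨c', hc' ▸ hw1, hseqH (i + 1) _ _ _ e⟩
    have sGreen : ∀ u ∈ greenL L, ∃ c', u = [c'] := by
      rintro u ⟨u0, hu0, rfl⟩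
      obtain ⟨c0, rfl⟩ := hsingle u0 hu0
      exact ⟨(true, c0), rfl⟩
    have sRed : ∀ u ∈ redL L, ∃ c', u = [c'] := by
      rintro u ⟨u0, hu0, rfl⟩
      obtain ⟨c0, rfl⟩ := hsingle u0 hu0
      exact ⟨(false, c0), rfl⟩
    have greenOf : ∀ c', [c'] ∈ greenL L → ∃ c0, c' = (true, c0) := by
      rintro c' ⟨u0, hu0, he'⟩
      obtain ⟨c0, rfl⟩ := hsingle u0 hu0
      exact ⟨c0, by simpa [greenW] using he'.symm⟩
    have redOf : ∀ c', [c'] ∈ redL L → ∃ c0, c' = (false, c0) := by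
      rintro c' ⟨u0, hu0, he'⟩
      obtain ⟨c0, rfl⟩ := hsingle u0 hu0
      exact ⟨c0, by simpa [redW] using he'.symm⟩
    cases col
    · -- a red edge
      refine ⟨⟨d, h⟩, ?_⟩
      obtain ⟨c', hc'm, hHe⟩ := fire (rcBwd L) (Or.inr ⟨L, hQQg L hLg, rfl⟩)
        ⟨[(false, d)], ⟨[d], hdL, rfl⟩, pathSat_single' he⟩ sGreen
      obtain ⟨c0, rfl⟩ := greenOf c' hc'm
      exact ⟨c0, hHe⟩
    · -- a green edge
      refine ⟨?_, ⟨d, h⟩⟩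
      obtain ⟨c', hc'm, hHe⟩ := fire (rcFwd L) (Or.inl ⟨L, hQQg L hLg, rfl⟩)
        ⟨[(true, d)], ⟨[d], hdL, rfl⟩, pathSat_single' he⟩ sRed
      obtain ⟨c0, rfl⟩ := redOf c' hc'm
      exact ⟨c0, hHe⟩
  -- recoloring of reachability
  have hrecolor : ∀ x y, Reach H x y →
      (∃ w : List Sig, pathSat H x (redW w) y) ∧
      (∃ w : List Sig, pathSat H x (greenW w) y) := by
    intro x y hxy
    obtain ⟨w, hw⟩ := hxy
    induction w generalizing x with
    | nil => cases hw; exact ⟨⟨[], rfl⟩, ⟨[], rfl⟩⟩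
    | cons c w ih =>
      obtain ⟨z, hz, hp⟩ := hw
      obtain ⟨⟨w1, h1⟩, ⟨w2, h2⟩⟩ := ih z hp
      obtain ⟨⟨c1, e1⟩, ⟨c2, e2⟩⟩ := hopp _ _ _ hz
      exact ⟨⟨c1 :: w1, z, e1, h1⟩, ⟨c2 :: w2, z, e2, h2⟩⟩
  -- conclusion
  intro y hy
  have hyi : ∃ i, activeV (seq i) y := by
    obtain ⟨c, z, hcz | hcz⟩ := hy
    · obtain ⟨i, h⟩ := (hH y c z).mp hcz
      exact ⟨i, c, z, Or.inl h⟩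
    · obtain ⟨i, h⟩ := (hH z c y).mp hcz
      exact ⟨i, c, z, Or.inr h⟩
  obtain ⟨i, hyi⟩ := hyi
  have hre := (hInv i).reach y hyi
  constructor
  · intro hya
    have h1 : Reach H x1 y := Reach.mono' (hseqH i) (hre.1 hya)
    exact hrecolor _ y h1
  · intro hyb
    have h1 : Reach H y xN := Reach.mono' (hseqH i) (hre.2 hyb)
    exact hrecolor y _ h1
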